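/- Let M > 1, n ≥ 1 a natural number, and v ≥ 0 with (n−1)·M·v ≤ (M−1)·n and (n−1)·v < n. Let α ∈ [1/M, 1) satisfy the cubic h(α) = 0 and β ∈ (α/M, (M+1)/(2M)) satisfy q(β) = 0 (h and q as in the context), and define λ₁, λ₂, λ₃, λ₄, λ₅ as in the context (with λ₀ := 0 playing the role of λ_{0,*}). Then the following identities hold: (1) β = nλ₁ + nMλ₂; (2) α = λ₀ + Mλ₃ + nMα(λ₁ + λ₂); (3) α² = (n − (n−1)v)(λ₄ + λ₅) + (λ₀ + λ₃) + nMα²(λ₄ + λ₅ + λ₁ + λ₂) − 2nαλ₄ − 2nMαλ₅; (4) β² = n(λ₂ + λ₁) + (n − (n−1)v)(λ₄ + λ₅); (5) αβ = −n(λ₄ + λ₅) + nMα(λ₄ + λ₂) + nα(λ₅ + λ₁). -/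

import Mathlib

/-- The cubic `h(α)` from the two-step stochastic stepsize schedule analysis. -/
noncomputable def hcub (M n v α : ℝ) : ℝ :=
  (M - 1) * M * n * α ^ 3 - (M + 1) * (M - 2) * n * α ^ 2
    - (4 * n + (M - 1) * (n - 1) * v) * α + 2 * n

/-- The quadratic `q(β)` (in `β`, with parameters `M, n, v, α`) from the
two-step stochastic stepsize schedule analysis. -/
noncomputable def qquad (M n v α β : ℝ) : ℝ :=
  M * n * ((M - 1) ^ 2 * n + (M + 1) ^ 2 * (n - 1) * v) * ((M - 1) * α + (M + 1)) * β ^ 2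
  + 2 * M * (2 * (M - 1) * M * n * ((n - 1) * v - n) * α ^ 2
      + (M + 1) * ((n - 1) * v - n) * ((3 - M) * n + (M - 1) * (n - 1) * v) * α
      + n * (n - (M - 4) * M * n - (M + 1) * (M + 3) * (n - 1) * v)) * β
  + (-2 * M * (M ^ 2 - 1) * n * ((n - 1) * v - n) * α ^ 2
      + (2 * (2 + M + 2 * M ^ 2 - M ^ 3) * n ^ 2 + (M - 3) * (M + 1) ^ 2 * (n - 1) * n * v
          - (M - 1) * (M + 1) ^ 2 * (n - 1) ^ 2 * v ^ 2) * α
      + 2 * (M + 1) ^ 2 * n * ((n - 1) * v - n))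

/-- The dual multiplier `l1 = λ_{i,*}`. -/
noncomputable def lam1 (M n α β : ℝ) : ℝ :=
  (α + β - α * β) / (n * (1 + M + (M - 1) * α))

/-- The dual multiplier `l2 = λ_{*,i}`. -/
noncomputable def lam2 (M n α β : ℝ) : ℝ :=
  (M * β + α * (M * β - 1)) / (M * n * (1 + M + (M - 1) * α))

/-- The dual multiplier `l3 = λ_{*,0}`. -/
noncomputable def lam3 (M n α β : ℝ) : ℝ :=
  n * (lam1 M n α β - lam2 M n α β)

/-- The dual multiplier `l4 = λ_{0,i}`. -/
noncomputable def lam4 (M n v α β : ℝ) : ℝ :=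
  (n ^ 2 * (lam1 M n α β + M * lam2 M n α β) ^ 2 - n * (lam1 M n α β + lam2 M n α β))
      / (2 * (n - (n - 1) * v))
    + (lam1 M n α β - lam2 M n α β) / 2

/-- The dual multiplier `l5 = λ_{i,0}`. -/
noncomputable def lam5 (M n v α β : ℝ) : ℝ :=
  (n ^ 2 * (lam1 M n α β + M * lam2 M n α β) ^ 2 - n * (lam1 M n α β + lam2 M n α β))
      / (2 * (n - (n - 1) * v))
    - (lam1 M n α β - lam2 M n α β) / 2

/-- The dual multiplier `τ`. -/
noncomputable def tauD (M n α β : ℝ) : ℝ :=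
  1 - M * (lam3 M n α β + n * lam1 M n α β + n * lam2 M n α β)

set_option maxHeartbeats 10000000 in
theorem stmt_15 (M : ℝ) (n : ℕ) (v : ℝ)
    (hM : 1 < M) (hn : 1 ≤ n) (hv : 0 ≤ v)
    (hbound : ((n : ℝ) - 1) * M * v ≤ (M - 1) * n)
    (hvn : ((n : ℝ) - 1) * v < n)
    (α β : ℝ)
    (hα : α ∈ Set.Ico (1 / M) 1) (hroot : hcub M (n : ℝ) v α = 0)
    (hβ : β ∈ Set.Ioo (α / M) ((M + 1) / (2 * M))) (hqroot : qquad M (n : ℝ) v α β = 0) :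
    let l0 : ℝ := 0
    let l1 := lam1 M (n : ℝ) α β
    let l2 := lam2 M (n : ℝ) α β
    let l3 := lam3 M (n : ℝ) α β
    let l4 := lam4 M (n : ℝ) v α β
    let l5 := lam5 M (n : ℝ) v α β
    β = (n : ℝ) * l1 + (n : ℝ) * M * l2 ∧
    α = l0 + M * l3 + (n : ℝ) * M * α * (l1 + l2) ∧
    α ^ 2 = ((n : ℝ) - ((n : ℝ) - 1) * v) * (l4 + l5) + (l0 + l3)
        + (n : ℝ) * M * α ^ 2 * (l4 + l5 + l1 + l2)
        - 2 * (n : ℝ) * α * l4 - 2 * (n : ℝ) * M * α * l5 ∧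
    β ^ 2 = (n : ℝ) * (l2 + l1) + ((n : ℝ) - ((n : ℝ) - 1) * v) * (l4 + l5) ∧
    α * β = -((n : ℝ) * (l4 + l5)) + (n : ℝ) * M * α * (l4 + l2)
        + (n : ℝ) * α * (l5 + l1) := by
  have hn1 : (1:ℝ) ≤ (n:ℝ) := by exact_mod_cast hn
  have hn0 : (0:ℝ) < (n:ℝ) := by linarith
  obtain ⟨hα1, hα2⟩ := hα
  have hM0 : (0:ℝ) < M := by linarith
  have hα0 : (0:ℝ) < α := lt_of_lt_of_le (by positivity) hα1
  have hDp : (0:ℝ) < 1 + M + (M - 1) * α := by nlinarith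
  have hE : (0:ℝ) < (n:ℝ) - ((n:ℝ) - 1) * v := by linarith
  have hMne : M ≠ 0 := ne_of_gt hM0
  have hnne : (n:ℝ) ≠ 0 := ne_of_gt hn0
  have hDpne : 1 + M + (M - 1) * α ≠ 0 := ne_of_gt hDp
  have hEne : (n:ℝ) - ((n:ℝ) - 1) * v ≠ 0 := ne_of_gt hE
  have hK : (2 * ((n:ℝ) - ((n:ℝ) - 1) * v) * M * (n:ℝ) * (1 + M + (M - 1) * α)) ≠ 0 := by positivity
  have hh : (M-1)*M*(n:ℝ)*α^3 - (M+1)*(M-2)*(n:ℝ)*α^2 - (4*(n:ℝ)+(M-1)*((n:ℝ)-1)*v)*α + 2*(n:ℝ) = 0 := hroot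
  have hq : M * (n:ℝ) * ((M - 1) ^ 2 * (n:ℝ) + (M + 1) ^ 2 * ((n:ℝ) - 1) * v) * ((M - 1) * α + (M + 1)) * β ^ 2
      + 2 * M * (2 * (M - 1) * M * (n:ℝ) * (((n:ℝ) - 1) * v - (n:ℝ)) * α ^ 2
          + (M + 1) * (((n:ℝ) - 1) * v - (n:ℝ)) * ((3 - M) * (n:ℝ) + (M - 1) * ((n:ℝ) - 1) * v) * α
          + (n:ℝ) * ((n:ℝ) - (M - 4) * M * (n:ℝ) - (M + 1) * (M + 3) * ((n:ℝ) - 1) * v)) * β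
      + (-2 * M * (M ^ 2 - 1) * (n:ℝ) * (((n:ℝ) - 1) * v - (n:ℝ)) * α ^ 2
          + (2 * (2 + M + 2 * M ^ 2 - M ^ 3) * (n:ℝ) ^ 2 + (M - 3) * (M + 1) ^ 2 * ((n:ℝ) - 1) * (n:ℝ) * v
              - (M - 1) * (M + 1) ^ 2 * ((n:ℝ) - 1) ^ 2 * v ^ 2) * α
          + 2 * (M + 1) ^ 2 * (n:ℝ) * (((n:ℝ) - 1) * v - (n:ℝ))) = 0 := hqroot
  have hLq : M*(n:ℝ)*((M-1)^2*(n:ℝ)+(M+1)^2*((n:ℝ)-1)*v)*((M-1)*α+(M+1)) ≠ 0 := by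
    have h2 : (0:ℝ) ≤ (M+1)^2*((n:ℝ)-1)*v :=
      mul_nonneg (mul_nonneg (by positivity) (by linarith)) hv
    have h1 : (0:ℝ) < (M-1)^2*(n:ℝ) + (M+1)^2*((n:ℝ)-1)*v := by nlinarith
    have h3 : (0:ℝ) < (M-1)*α+(M+1) := by nlinarith
    exact ne_of_gt (mul_pos (mul_pos (mul_pos hM0 hn0) h1) h3)
  have key3 : ((-2)*M^3*(n:ℝ)*α^3*β^2 + (2)*M^3*(n:ℝ)*α*β^2 + (2)*M^2*(n:ℝ)*v*α*β^2 + (2)*M^2*(n:ℝ)*v*β^2 + (2)*M^2*(n:ℝ)*α^3*β^2 + (2)*M^2*(n:ℝ)*α^3 + (-2)*M^2*(n:ℝ)*α^2*β^2 + (4)*M^2*(n:ℝ)*α^2*β + (-2)*M^2*(n:ℝ)*α^2 + (2)*M^2*(n:ℝ)*α*β^2 + (-4)*M^2*(n:ℝ)*α*β + (-2)*M^2*(n:ℝ)*β^2 + (-2)*M^2*v*α*β^2 + (-2)*M^2*v*β^2 + (4)*M*(n:ℝ)*v*α^2*β + (-2)*M*(n:ℝ)*v*α^2 + (-2)*M*(n:ℝ)*v*α*β^2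 + (-4)*M*(n:ℝ)*v*α*β + (2)*M*(n:ℝ)*v*β^2 + (-4)*M*(n:ℝ)*v*β + (-2)*M*(n:ℝ)*α^3 + (-2)*M*(n:ℝ)*α^2*β^2 + (-4)*M*(n:ℝ)*α^2*β + (2)*M*(n:ℝ)*α^2 + (4)*M*(n:ℝ)*α*β^2 + (-2)*M*(n:ℝ)*β^2 + (4)*M*(n:ℝ)*β + (-4)*M*v*α^2*β + (2)*M*v*α^2 + (2)*M*v*α*β^2 + (4)*M*v*α*β + (-2)*M*v*β^2 + (4)*M*v*β + (-2)*(n:ℝ)*v*α^2 + (4)*(n:ℝ)*v*α + (4)*(n:ℝ)*α^2 + (-4)*(n:ℝ)*α + (2)*v*α^2 + (-4)*v*α) = 0 := by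
    apply mul_left_cancel₀ hLq
    rw [mul_zero]
    linear_combination (((-2)*M^3*(n:ℝ)*α^3 + (2)*M^3*(n:ℝ)*α + (2)*M^2*(n:ℝ)*v*α + (2)*M^2*(n:ℝ)*v + (2)*M^2*(n:ℝ)*α^3 + (-2)*M^2*(n:ℝ)*α^2 + (2)*M^2*(n:ℝ)*α + (-2)*M^2*(n:ℝ) + (-2)*M^2*v*α + (-2)*M^2*v + (-2)*M*(n:ℝ)*v*α + (2)*M*(n:ℝ)*v + (-2)*M*(n:ℝ)*α^2 + (4)*M*(n:ℝ)*α + (-2)*M*(n:ℝ) + (2)*M*v*α + (-2)*M*v)) * hq + (((4)*M^4*(n:ℝ)^2*v^2*α*β + (-2)*M^4*(n:ℝ)^2*v^2*α + (4)*M^4*(n:ℝ)^2*v^2*β + (-2)*M^4*(n:ℝ)^2*v^2 + (8)*M^4*(n:ℝ)^2*v*α^2*β + (-4)*M^4*(n:ℝ)^2*v*α^2 + (-8)*M^4*(n:ℝ)^2*v*β + (4)*M^4*(n:ℝ)^2*v + (-8)*M^4*(n:ℝ)^2*α^2*β + (4)*M^4*(n:ℝ)^2*α^2 + (-4)*M^4*(n:ℝ)^2*α*β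 + (2)*M^4*(n:ℝ)^2*α + (4)*M^4*(n:ℝ)^2*β + (-2)*M^4*(n:ℝ)^2 + (-8)*M^4*(n:ℝ)*v^2*α*β + (4)*M^4*(n:ℝ)*v^2*α + (-8)*M^4*(n:ℝ)*v^2*β + (4)*M^4*(n:ℝ)*v^2 + (-8)*M^4*(n:ℝ)*v*α^2*β + (4)*M^4*(n:ℝ)*v*α^2 + (8)*M^4*(n:ℝ)*v*β + (-4)*M^4*(n:ℝ)*v + (4)*M^4*v^2*α*β + (-2)*M^4*v^2*α + (4)*M^4*v^2*β + (-2)*M^4*v^2 + (-2)*M^3*(n:ℝ)^2*v^2*α + (8)*M^3*(n:ℝ)^2*v^2*β + (-6)*M^3*(n:ℝ)^2*v^2 + (-8)*M^3*(n:ℝ)^2*v*α^2*β + (8)*M^3*(n:ℝ)^2*v*α*β + (-4)*M^3*(n:ℝ)^2*v*α + (-16)*M^3*(n:ℝ)^2*v*β + (12)*M^3*(n:ℝ)^2*v + (8)*M^3*(n:ℝ)^2*α^2*β + (-8)*M^3*(n:ℝ)^2*α*β + (6)*M^3*(n:ℝ)^2*α + (8)*M^3*(n:ℝ)^2*β + (-6)*M^3*(n:ℝ)^2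 + (4)*M^3*(n:ℝ)*v^2*α + (-16)*M^3*(n:ℝ)*v^2*β + (12)*M^3*(n:ℝ)*v^2 + (8)*M^3*(n:ℝ)*v*α^2*β + (-8)*M^3*(n:ℝ)*v*α*β + (4)*M^3*(n:ℝ)*v*α + (16)*M^3*(n:ℝ)*v*β + (-12)*M^3*(n:ℝ)*v + (-2)*M^3*v^2*α + (8)*M^3*v^2*β + (-6)*M^3*v^2 + (-4)*M^2*(n:ℝ)^2*v^2*α*β + (2)*M^2*(n:ℝ)^2*v^2*α + (4)*M^2*(n:ℝ)^2*v^2*β + (-6)*M^2*(n:ℝ)^2*v^2 + (4)*M^2*(n:ℝ)^2*v*α^2 + (8)*M^2*(n:ℝ)^2*v*α*β + (-8)*M^2*(n:ℝ)^2*v*α + (-8)*M^2*(n:ℝ)^2*v*β + (12)*M^2*(n:ℝ)^2*v + (-4)*M^2*(n:ℝ)^2*α^2 + (-4)*M^2*(n:ℝ)^2*α*β + (6)*M^2*(n:ℝ)^2*α + (4)*M^2*(n:ℝ)^2*β + (-6)*M^2*(n:ℝ)^2 + (8)*M^2*(n:ℝ)*v^2*α*β + (-4)*M^2*(n:ℝ)*v^2*α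 + (-8)*M^2*(n:ℝ)*v^2*β + (12)*M^2*(n:ℝ)*v^2 + (-4)*M^2*(n:ℝ)*v*α^2 + (-8)*M^2*(n:ℝ)*v*α*β + (8)*M^2*(n:ℝ)*v*α + (8)*M^2*(n:ℝ)*v*β + (-12)*M^2*(n:ℝ)*v + (-4)*M^2*v^2*α*β + (2)*M^2*v^2*α + (4)*M^2*v^2*β + (-6)*M^2*v^2 + (2)*M*(n:ℝ)^2*v^2*α + (-2)*M*(n:ℝ)^2*v^2 + (-4)*M*(n:ℝ)^2*v*α + (4)*M*(n:ℝ)^2*v + (2)*M*(n:ℝ)^2*α + (-2)*M*(n:ℝ)^2 + (-4)*M*(n:ℝ)*v^2*α + (4)*M*(n:ℝ)*v^2 + (4)*M*(n:ℝ)*v*α + (-4)*M*(n:ℝ)*v + (2)*M*v^2*α + (-2)*M*v^2)) * hh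
  have key5 : (-M^3*(n:ℝ)*α^2*β^2 + -M^3*(n:ℝ)*α*β^2 + (-2)*M^2*(n:ℝ)*v*α^2*β + M^2*(n:ℝ)*v*α^2 + (2)*M^2*(n:ℝ)*α^2*β + (2)*M^2*(n:ℝ)*α*β + (2)*M^2*(n:ℝ)*β^2 + (2)*M^2*v*α^2*β + -M^2*v*α^2 + (2)*M*(n:ℝ)*v*α^2*β + M*(n:ℝ)*α^2*β^2 + (-2)*M*(n:ℝ)*α^2*β + (-3)*M*(n:ℝ)*α*β^2 + (2)*M*(n:ℝ)*α*β + (-2)*M*(n:ℝ)*α + (2)*M*(n:ℝ)*β^2 + (-4)*M*(n:ℝ)*β + (-2)*M*v*α^2*β + -(n:ℝ)*v*α^2 + (2)*(n:ℝ)*α + v*α^2) = 0 := by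
    apply mul_left_cancel₀ hLq
    rw [mul_zero]
    linear_combination ((-M^3*(n:ℝ)*α^2 + -M^3*(n:ℝ)*α + (2)*M^2*(n:ℝ) + M*(n:ℝ)*α^2 + (-3)*M*(n:ℝ)*α + (2)*M*(n:ℝ))) * hq + (((4)*M^4*(n:ℝ)^2*v*α*β + (-2)*M^4*(n:ℝ)^2*v*α + (4)*M^4*(n:ℝ)^2*v*β + (-2)*M^4*(n:ℝ)^2*v + (-4)*M^4*(n:ℝ)^2*α*β + (2)*M^4*(n:ℝ)^2*α + (-4)*M^4*(n:ℝ)^2*β + (2)*M^4*(n:ℝ)^2 + (-4)*M^4*(n:ℝ)*v*α*β + (2)*M^4*(n:ℝ)*v*α + (-4)*M^4*(n:ℝ)*v*β + (2)*M^4*(n:ℝ)*v + (-2)*M^3*(n:ℝ)^2*v*α + (8)*M^3*(n:ℝ)^2*v*β + (-6)*M^3*(n:ℝ)^2*v + (2)*M^3*(n:ℝ)^2*α + (-8)*M^3*(n:ℝ)^2*β + (6)*M^3*(n:ℝ)^2 + (2)*M^3*(n:ℝ)*v*α + (-8)*M^3*(n:ℝ)*v*β + (6)*M^3*(n:ℝ)*v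 + (-4)*M^2*(n:ℝ)^2*v*α*β + (2)*M^2*(n:ℝ)^2*v*α + (4)*M^2*(n:ℝ)^2*v*β + (-6)*M^2*(n:ℝ)^2*v + (4)*M^2*(n:ℝ)^2*α*β + (-2)*M^2*(n:ℝ)^2*α + (-4)*M^2*(n:ℝ)^2*β + (6)*M^2*(n:ℝ)^2 + (4)*M^2*(n:ℝ)*v*α*β + (-2)*M^2*(n:ℝ)*v*α + (-4)*M^2*(n:ℝ)*v*β + (6)*M^2*(n:ℝ)*v + (2)*M*(n:ℝ)^2*v*α + (-2)*M*(n:ℝ)^2*v + (-2)*M*(n:ℝ)^2*α + (2)*M*(n:ℝ)^2 + (-2)*M*(n:ℝ)*v*α + (2)*M*(n:ℝ)*v)) * hh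
  have hb1 : lam1 M (n:ℝ) α β + M * lam2 M (n:ℝ) α β = β / (n:ℝ) := by
    simp only [lam1, lam2]
    field_simp
    rw [div_eq_iff (by rw [mul_comm]; exact hDpne)]
    ring
  have h12 : lam1 M (n:ℝ) α β + lam2 M (n:ℝ) α β = ((M-1)*α + 2*M*β) / (M * (n:ℝ) * (1 + M + (M - 1) * α)) := by
    simp only [lam1, lam2]
    field_simp
    ring
  have hdiff : lam1 M (n:ℝ) α β - lam2 M (n:ℝ) α β = (α*(M+1-2*M*β)) / (M * (n:ℝ) * (1 + M + (M - 1) * α)) := by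
    simp only [lam1, lam2]
    field_simp
    ring
  have H1 : (2 * ((n:ℝ) - ((n:ℝ) - 1) * v) * M * (n:ℝ) * (1 + M + (M - 1) * α)) * lam1 M (n:ℝ) α β = (2 * ((n:ℝ) - ((n:ℝ) - 1) * v) * M * (α + β - α*β)) := by
    rw [lam1]
    field_simp
  have H2 : (2 * ((n:ℝ) - ((n:ℝ) - 1) * v) * M * (n:ℝ) * (1 + M + (M - 1) * α)) * lam2 M (n:ℝ) α β = (2 * ((n:ℝ) - ((n:ℝ) - 1) * v) * (M*β + M*α*β - α)) := by
    rw [lam2]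
    field_simp
    ring
  have H3 : (2 * ((n:ℝ) - ((n:ℝ) - 1) * v) * M * (n:ℝ) * (1 + M + (M - 1) * α)) * lam3 M (n:ℝ) α β = (2 * ((n:ℝ) - ((n:ℝ) - 1) * v) * (n:ℝ) * (α*(M+1-2*M*β))) := by
    rw [lam3, hdiff]
    field_simp
  have H4 : (2 * ((n:ℝ) - ((n:ℝ) - 1) * v) * M * (n:ℝ) * (1 + M + (M - 1) * α)) * lam4 M (n:ℝ) v α β = ((n:ℝ) * (M * (1 + M + (M - 1) * α) * β^2 - ((M-1)*α + 2*M*β)) + ((n:ℝ) - ((n:ℝ) - 1) * v) * (α*(M+1-2*M*β))) := by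
    rw [lam4, hb1, h12, hdiff]
    field_simp
  have H5 : (2 * ((n:ℝ) - ((n:ℝ) - 1) * v) * M * (n:ℝ) * (1 + M + (M - 1) * α)) * lam5 M (n:ℝ) v α β = ((n:ℝ) * (M * (1 + M + (M - 1) * α) * β^2 - ((M-1)*α + 2*M*β)) - ((n:ℝ) - ((n:ℝ) - 1) * v) * (α*(M+1-2*M*β))) := by
    rw [lam5, hb1, h12, hdiff]
    field_simp
  refine ⟨?_, ?_, ?_, ?_, ?_⟩
  · apply mul_left_cancel₀ hK
    linear_combination (-(n:ℝ)) * H1 - (n:ℝ) * M * H2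
  · apply mul_left_cancel₀ hK
    linear_combination (-M) * H3 - (n:ℝ) * M * α * H1 - (n:ℝ) * M * α * H2
  · apply mul_left_cancel₀ hK
    linear_combination (-(((n:ℝ) - ((n:ℝ) - 1) * v) + (n:ℝ)*M*α^2 - 2*(n:ℝ)*α)) * H4
      - (((n:ℝ) - ((n:ℝ) - 1) * v) + (n:ℝ)*M*α^2 - 2*(n:ℝ)*M*α) * H5 - H3
      - ((n:ℝ)*M*α^2) * H1 - ((n:ℝ)*M*α^2) * H2 + (n:ℝ) * key3
  · apply mul_left_cancel₀ hK
    linear_combination (-(n:ℝ)) * H1 - (n:ℝ) * H2 - ((n:ℝ) - ((n:ℝ) - 1) * v) * H4 - ((n:ℝ) - ((n:ℝ) - 1) * v) * H5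
  · apply mul_left_cancel₀ hK
    linear_combination ((n:ℝ) - (n:ℝ)*M*α) * H4 + ((n:ℝ) - (n:ℝ)*α) * H5
      - (n:ℝ)*M*α * H2 - (n:ℝ)*α * H1 + (n:ℝ) * key5
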